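/- Let C be an [n,k] linear code over F_q with generator matrix G (a k×n matrix of full row rank whose row space is C), and let M be any n×n matrix over F_q. Define the M-hull of C as Hull_M(C) = C ∩ C^{⊥_M}, where C^{⊥_M} = {y : x M y^T = 0 for all x in C}. Then dim Hull_M(C) = k − rank(G M G^T). -/

import Mathlib

open Matrix

/-- The `M`-dual of a code `C ⊆ F^n`: all `y` with `x M yᵀ = 0` for every `x ∈ C`. -/
def Mdual {F : Type*} [Field F] {n : ℕ} (M : Matrix (Fin n) (Fin n) F)
    (C : Submodule F (Fin n → F)) : Submodule F (Fin n → F) where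
  carrier := {y | ∀ x ∈ C, x ⬝ᵥ (M *ᵥ y) = 0}
  add_mem' := by
    intro y z hy hz x hx
    simp [Matrix.mulVec_add, dotProduct_add, hy x hx, hz x hx]
  zero_mem' := by
    intro x hx
    simp
  smul_mem' := by
    intro c y hy x hx
    simp [Matrix.mulVec_smul, dotProduct_smul, hy x hx]

theorem finrank_M_hull {F : Type*} [Field F] [Fintype F] {n k : ℕ}
    (G : Matrix (Fin k) (Fin n) F) (hG : G.rank = k)
    (C : Submodule F (Fin n → F)) (hC : C = LinearMap.range G.vecMulLinear)
    (M : Matrix (Fin n) (Fin n) F) :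
    Module.finrank F ↥(C ⊓ Mdual M C) = k - (G * M * Gᵀ).rank := by
  set A := G * M * Gᵀ with hA
  -- key computation: (u ᵥ* G) ⬝ᵥ (M *ᵥ (v ᵥ* G)) = u ⬝ᵥ (A *ᵥ v)
  have key : ∀ u v : Fin k → F, (u ᵥ* G) ⬝ᵥ (M *ᵥ (v ᵥ* G)) = u ⬝ᵥ (A *ᵥ v) := by
    intro u v
    rw [← Matrix.mulVec_transpose G v, Matrix.mulVec_mulVec, Matrix.dotProduct_mulVec,
      Matrix.vecMul_vecMul, Matrix.dotProduct_mulVec, hA, Matrix.mul_assoc]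
  have hmap : C ⊓ Mdual M C
      = Submodule.map G.vecMulLinear (LinearMap.ker A.mulVecLin) := by
    subst hC
    ext y
    simp only [Submodule.mem_inf, Submodule.mem_map, LinearMap.mem_ker, LinearMap.mem_range]
    constructor
    · rintro ⟨⟨v, rfl⟩, h⟩
      refine ⟨v, ?_, rfl⟩
      apply dotProduct_eq_zero
      intro u
      rw [dotProduct_comm]
      have := h (G.vecMulLinear u) ⟨u, rfl⟩
      simpa [Matrix.vecMulLinear_apply, Matrix.mulVecLin_apply, key] using this
    · rintro ⟨v, hv, rfl⟩
      refine ⟨⟨v, rfl⟩, ?_⟩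
      rintro x ⟨u, rfl⟩
      have := key u v
      simp only [Matrix.mulVecLin_apply] at hv
      simp [Matrix.vecMulLinear_apply, this, hv]
  -- injectivity of vecMulLinear from full rank
  have hinj : Function.Injective G.vecMulLinear := by
    rw [← LinearMap.ker_eq_bot]
    have h1 : G.vecMulLinear = Gᵀ.mulVecLin := (Matrix.mulVecLin_transpose G).symm
    rw [h1]
    have h2 := LinearMap.finrank_range_add_finrank_ker Gᵀ.mulVecLin
    have h3 : Module.finrank F (LinearMap.range Gᵀ.mulVecLin) = k := by
      rw [← Matrix.rank, Matrix.rank_transpose, hG]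
    rw [h3, Module.finrank_fintype_fun_eq_card, Fintype.card_fin] at h2
    have h4 : Module.finrank F (LinearMap.ker Gᵀ.mulVecLin) = 0 := by omega
    exact Submodule.finrank_eq_zero.mp h4
  rw [hmap]
  have heq : Module.finrank F
      ↥(Submodule.map G.vecMulLinear (LinearMap.ker A.mulVecLin))
      = Module.finrank F ↥(LinearMap.ker A.mulVecLin) :=
    (LinearEquiv.finrank_eq (Submodule.equivMapOfInjective _ hinj _)).symm
  rw [heq]
  have h5 := LinearMap.finrank_range_add_finrank_ker A.mulVecLin
  rw [Module.finrank_fintype_fun_eq_card, Fintype.card_fin] at h5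
  have h6 : Module.finrank F (LinearMap.range A.mulVecLin) = A.rank := rfl
  omega
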